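/- Let α, β be odd integers, ω ∈ ℤ, η ≥ 0 an integer, and let D̃ = {(0,0)ᵗ, (α,0)ᵗ, (ω, 2^η β)ᵗ, (−α−ω, −2^η β)ᵗ} ⊂ ℤ². Then for every i ∈ {0,1,2,3}, the difference set Θᵢ − Θᵢ is disjoint from Z(m_D̃), i.e. (Θᵢ − Θᵢ) ∩ Z(m_D̃) = ∅. -/

import Mathlib

open MeasureTheory Matrix Complex
open scoped ENNReal

noncomputable section

/-- The exponential function `x ↦ e^{2πi⟨l,x⟩}` on `Fin n → ℝ`. -/
def expChar {n : ℕ} (l x : Fin n → ℝ) : ℂ :=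
  Complex.exp (2 * Real.pi * Complex.I * Complex.ofReal (∑ i, l i * x i))

/-- `Λ` is an orthogonal set of `μ`: the exponentials `e^{2πi⟨λ,·⟩}`, `λ ∈ Λ`,
form an orthonormal family in `L²(μ)`. -/
def IsOrthogonalSet {n : ℕ} (μ : Measure (Fin n → ℝ)) (Λ : Set (Fin n → ℝ)) : Prop :=
  ∃ b : Λ → Lp ℂ 2 μ,
    (∀ l : Λ, (b l : (Fin n → ℝ) → ℂ) =ᵐ[μ] expChar (l : Fin n → ℝ)) ∧
    Orthonormal ℂ b

/-- `Λ` is a spectrum of `μ`: the exponentials `e^{2πi⟨λ,·⟩}`, `λ ∈ Λ`,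
form an orthonormal basis (orthonormal and total) of `L²(μ)`. -/
def IsSpectrum {n : ℕ} (μ : Measure (Fin n → ℝ)) (Λ : Set (Fin n → ℝ)) : Prop :=
  ∃ b : Λ → Lp ℂ 2 μ,
    (∀ l : Λ, (b l : (Fin n → ℝ) → ℂ) =ᵐ[μ] expChar (l : Fin n → ℝ)) ∧
    Orthonormal ℂ b ∧
    (Submodule.span ℂ (Set.range b)).topologicalClosure = ⊤

/-- `μ` is a spectral measure : some countable `Λ` is a spectrum of `μ`. -/
def IsSpectralMeasure {n : ℕ} (μ : Measure (Fin n → ℝ)) : Prop :=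
  ∃ Λ : Set (Fin n → ℝ), Λ.Countable ∧ IsSpectrum μ Λ

/-- A real matrix is expansive if all of its (complex) eigenvalues have modulus `> 1`. -/
def Expansive {n : ℕ} (M : Matrix (Fin n) (Fin n) ℝ) : Prop :=
  ∀ z : ℂ, (M.map (Complex.ofReal)).charpoly.IsRoot z → 1 < ‖z‖

/-- `μ` is the self-affine measure associated with `(M, D)`: a compactly supported
Borel probability measure satisfying `μ = (1/#D) ∑_{d ∈ D} μ ∘ φ_d⁻¹`,
where `φ_d x = M⁻¹(x + d)`. -/
def IsSelfAffineMeasure {n : ℕ} (M : Matrix (Fin n) (Fin n) ℝ) (D : Finset (Fin n → ℝ))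
    (μ : Measure (Fin n → ℝ)) : Prop :=
  IsProbabilityMeasure μ ∧
  (∃ K : Set (Fin n → ℝ), IsCompact K ∧ μ Kᶜ = 0) ∧
  μ = (D.card : ℝ≥0∞)⁻¹ • ∑ d ∈ D, μ.map (fun x => M⁻¹.mulVec (x + d))

/-- Coordinatewise cast of an integer vector to a real vector. -/
def intCast {n : ℕ} (v : Fin n → ℤ) : Fin n → ℝ := fun i => (v i : ℝ)

/-- The matrix `H = N^{-1/2} (e^{2πi⟨M⁻¹d, s⟩})_{d ∈ D, s ∈ S}`. -/
def hadamardH {n : ℕ} (M : Matrix (Fin n) (Fin n) ℤ) (D S : Finset (Fin n → ℤ)) :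
    Matrix D S ℂ := fun d s =>
  (Real.sqrt (D.card) : ℂ)⁻¹ *
    Complex.exp (2 * Real.pi * Complex.I *
      Complex.ofReal (∑ i, ((M.map (Int.cast : ℤ → ℝ))⁻¹.mulVec (intCast d.1)) i * ((s.1 i : ℝ))))

/-- `(M, D, S)` is a Hadamard triple: `#D = #S` and
`H = N^{-1/2}(e^{2πi⟨M⁻¹d,s⟩})` is unitary. -/
def IsHadamardTriple {n : ℕ} (M : Matrix (Fin n) (Fin n) ℤ) (D S : Finset (Fin n → ℤ)) :
    Prop :=
  D.card = S.card ∧ (hadamardH M D S)ᴴ * hadamardH M D S = 1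

/-- `(M, D)` is admissible: there is `S ⊂ ℤⁿ` such that `(M, D, S)` is a Hadamard triple. -/
def IsAdmissible {n : ℕ} (M : Matrix (Fin n) (Fin n) ℤ) (D : Finset (Fin n → ℤ)) : Prop :=
  ∃ S : Finset (Fin n → ℤ), IsHadamardTriple M D S

/-- The mask polynomial `m_D(x) = (1/#D) ∑_{d∈D} e^{2πi⟨d,x⟩}` of a finite set `D`. -/
def maskPoly {n : ℕ} (D : Finset (Fin n → ℝ)) (x : Fin n → ℝ) : ℂ :=
  (D.card : ℂ)⁻¹ * ∑ d ∈ D, Complex.exp (2 * Real.pi * Complex.I * Complex.ofReal (∑ i, d i * x i))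

/-- The Fourier transform `μ̂(ξ) = ∫ e^{2πi⟨x,ξ⟩} dμ(x)`. -/
def fourierMeasure {n : ℕ} (μ : Measure (Fin n → ℝ)) (ξ : Fin n → ℝ) : ℂ :=
  ∫ x, expChar ξ x ∂μ

/-- The sets `Θ₀, Θ₁, Θ₂, Θ₃` associated with odd integers `α, β`, `ω ∈ ℤ` and `η ≥ 0`:
`Θᵢ = {(2^η(2k+δᵢ)β, (2k'+εᵢ)α − (2k+δᵢ)ω)ᵗ/(2^{η+1}αβ) : k, k' ∈ ℤ}` where
`δᵢ = i % 2` and `εᵢ = i / 2`. -/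
def thetaSet (α β ω : ℤ) (η : ℕ) (i : Fin 4) : Set (Fin 2 → ℝ) :=
  { v | ∃ k k' : ℤ, v = ((2 : ℝ) ^ (η + 1) * (α : ℝ) * (β : ℝ))⁻¹ •
      intCast ![2 ^ η * (2 * k + ((i.val % 2 : ℕ) : ℤ)) * β,
        (2 * k' + ((i.val / 2 : ℕ) : ℤ)) * α - (2 * k + ((i.val % 2 : ℕ) : ℤ)) * ω] }
lemma exp_two_pi_int (t : ℤ) :
    Complex.exp (2 * Real.pi * Complex.I * Complex.ofReal ((t : ℝ))) = 1 := by
  rw [show (2 * (Real.pi : ℂ) * Complex.I * Complex.ofReal ((t : ℝ)))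
      = (t : ℤ) * (2 * Real.pi * Complex.I) by push_cast; ring]
  exact Complex.exp_int_mul_two_pi_mul_I t

theorem theta_difference_avoids_zero_set
    (α β ω : ℤ) (hα : Odd α) (hβ : Odd β) (η : ℕ)
    (Dt : Finset (Fin 2 → ℤ))
    (hDt : Dt = {![0, 0], ![α, 0], ![ω, 2 ^ η * β], ![-α - ω, -(2 ^ η * β)]}) :
    ∀ i : Fin 4, ∀ a ∈ thetaSet α β ω η i, ∀ b ∈ thetaSet α β ω η i,
      maskPoly (Dt.image intCast) (a - b) ≠ 0 := by
  intro i a ha b hb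
  obtain ⟨k, k', rfl⟩ := ha
  obtain ⟨l, l', rfl⟩ := hb
  have hα0 : (α : ℝ) ≠ 0 := by
    have : α ≠ 0 := by rintro rfl; exact (Int.not_odd_iff_even.mpr Even.zero) hα
    exact_mod_cast this
  have hβ0 : (β : ℝ) ≠ 0 := by
    have : β ≠ 0 := by rintro rfl; exact (Int.not_odd_iff_even.mpr Even.zero) hβ
    exact_mod_cast this
  have h20 : ((2 : ℝ) ^ (η + 1)) ≠ 0 := by positivity
  -- each exponential term equals 1
  have key : ∀ d ∈ Dt.image intCast,
      Complex.exp (2 * Real.pi * Complex.I *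
        Complex.ofReal (∑ j, d j *
          ((((2 : ℝ) ^ (η + 1) * (α : ℝ) * (β : ℝ))⁻¹ •
              intCast ![2 ^ η * (2 * k + ((i.val % 2 : ℕ) : ℤ)) * β,
                (2 * k' + ((i.val / 2 : ℕ) : ℤ)) * α - (2 * k + ((i.val % 2 : ℕ) : ℤ)) * ω] -
            ((2 : ℝ) ^ (η + 1) * (α : ℝ) * (β : ℝ))⁻¹ •
              intCast ![2 ^ η * (2 * l + ((i.val % 2 : ℕ) : ℤ)) * β,
                (2 * l' + ((i.val / 2 : ℕ) : ℤ)) * α - (2 * l + ((i.val % 2 : ℕ) : ℤ)) * ω]) j))) = 1 := by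
    intro d hd
    rw [Finset.mem_image] at hd
    obtain ⟨e, he, rfl⟩ := hd
    rw [hDt] at he
    simp only [Finset.mem_insert, Finset.mem_singleton] at he
    have hsum : ∃ t : ℤ, (∑ j, intCast e j *
        ((((2 : ℝ) ^ (η + 1) * (α : ℝ) * (β : ℝ))⁻¹ •
            intCast ![2 ^ η * (2 * k + ((i.val % 2 : ℕ) : ℤ)) * β,
              (2 * k' + ((i.val / 2 : ℕ) : ℤ)) * α - (2 * k + ((i.val % 2 : ℕ) : ℤ)) * ω] -
          ((2 : ℝ) ^ (η + 1) * (α : ℝ) * (β : ℝ))⁻¹ •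
            intCast ![2 ^ η * (2 * l + ((i.val % 2 : ℕ) : ℤ)) * β,
              (2 * l' + ((i.val / 2 : ℕ) : ℤ)) * α - (2 * l + ((i.val % 2 : ℕ) : ℤ)) * ω]) j)) = (t : ℝ) := by
      rcases he with rfl | rfl | rfl | rfl
      · exact ⟨0, by simp [intCast, Fin.sum_univ_two]⟩
      · refine ⟨k - l, ?_⟩
        simp only [intCast, Fin.sum_univ_two, Pi.sub_apply, Pi.smul_apply, smul_eq_mul,
          Matrix.cons_val_zero, Matrix.cons_val_one, Matrix.head_cons]
        push_cast
        field_simp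
        ring
      · refine ⟨k' - l', ?_⟩
        simp only [intCast, Fin.sum_univ_two, Pi.sub_apply, Pi.smul_apply, smul_eq_mul,
          Matrix.cons_val_zero, Matrix.cons_val_one, Matrix.head_cons]
        push_cast
        field_simp
        ring
      · refine ⟨(l - k) + (l' - k'), ?_⟩
        simp only [intCast, Fin.sum_univ_two, Pi.sub_apply, Pi.smul_apply, smul_eq_mul,
          Matrix.cons_val_zero, Matrix.cons_val_one, Matrix.head_cons]
        push_cast
        field_simp
        ring
    obtain ⟨t, ht⟩ := hsum
    rw [ht]
    exact exp_two_pi_int t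
  have hne : (Dt.image intCast).Nonempty := by
    rw [hDt]
    exact ⟨intCast ![0, 0], Finset.mem_image_of_mem _ (by simp)⟩
  rw [maskPoly, Finset.sum_congr rfl key, Finset.sum_const, nsmul_eq_mul, mul_one]
  have hcard : ((Dt.image intCast).card : ℂ) ≠ 0 := by
    exact_mod_cast (Finset.card_pos.mpr hne).ne'
  exact mul_ne_zero (inv_ne_zero hcard) hcard

end
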